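/- Let μ be an instance of REP over Σ with words u_start, u_end and rules w_i → w'_i for 1 ≤ i ≤ n. A substitution h is an overlapping solution of α_μ = β_μ if and only if there exist words v_1,…,v_n such that: (1) for each 1 ≤ i ≤ n, v_i is a prefix of h(x_i), |w_i| ≤ |v_i|, and h(x_i) w_i is a prefix of the infinite periodic word v_i^ω (equivalently, of v_i^m for all sufficiently large m); (2) v_1 = # u_start, and v_i = y_{i−1} w'_{i−1} for 2 ≤ i ≤ n; (3) y_n w'_n h(x_{n+1}) = h(x_{n+1}) # u_end; where, for 1 ≤ i ≤ n, y_i denotes the suffix of h(x_i) of length |v_i| − |w_i|. -/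
import Mathlib


/-!
Framework for REP (Rewriting with Programmed Rules) and the associated word
equations α_μ = β_μ.  Constants: `Option A` models Σ ∪ {#}, where `none` is the
fresh letter `#` and `some a` embeds a ∈ Σ.  Variables are modelled by `ℕ`
(the variable x_i is `i`).
-/

namespace REP

/-- `u_end` is obtained from `u_start` by applying each of the `n` rules
`w i → w' i` (for `i = 1, …, n`) once, in order, each application replacing one
occurrence of `w i` by `w' i`. -/
def SatisfiesREP {A : Type} (n : ℕ) (ustart uend : List A) (w w' : ℕ → List A) : Prop :=
  ∃ u : ℕ → List A, u 0 = ustart ∧ u n = uend ∧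
    ∀ i, 1 ≤ i → i ≤ n → ∃ s t : List A,
      u (i - 1) = s ++ w i ++ t ∧ u i = s ++ w' i ++ t

/-- Apply a substitution (identity on constants) to a pattern. -/
def applySub {A : Type} (h : ℕ → List (Option A)) : List (Option A ⊕ ℕ) → List (Option A)
  | [] => []
  | Sum.inl a :: rest => a :: applySub h rest
  | Sum.inr x :: rest => h x ++ applySub h rest

/-- Embed a constant word over Σ into patterns over Σ ∪ {#}. -/
def lift {A : Type} (u : List A) : List (Option A ⊕ ℕ) := u.map (fun a => Sum.inl (some a))

/-- Embed a constant word over Σ into words over Σ ∪ {#}. -/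
def liftW {A : Type} (u : List A) : List (Option A) := u.map some

/-- The fresh letter `#` as a pattern symbol. -/
def hash {A : Type} : Option A ⊕ ℕ := Sum.inl none

/-- `x_1 w_1 x_2 w_2 ⋯ x_n w_n`. -/
def blocks {A : Type} (w : ℕ → List A) : ℕ → List (Option A ⊕ ℕ)
  | 0 => []
  | n + 1 => blocks w n ++ (Sum.inr (n + 1) :: lift (w (n + 1)))

/-- α_μ = `x_1 w_1 x_2 w_2 ⋯ x_n w_n x_{n+1} # u_end`. -/
def alphaMu {A : Type} (n : ℕ) (uend : List A) (w : ℕ → List A) : List (Option A ⊕ ℕ) :=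
  blocks w n ++ [Sum.inr (n + 1), hash] ++ lift uend

/-- β_μ = `# u_start x_1 w'_1 x_2 w'_2 ⋯ x_n w'_n x_{n+1}`. -/
def betaMu {A : Type} (n : ℕ) (ustart : List A) (w' : ℕ → List A) : List (Option A ⊕ ℕ) :=
  hash :: lift ustart ++ blocks w' n ++ [Sum.inr (n + 1)]

/-- `x_1 w_1 ⋯ x_i w_i`. -/
def alphaPrefix {A : Type} (w : ℕ → List A) (i : ℕ) : List (Option A ⊕ ℕ) := blocks w i

/-- `# u_start x_1 w'_1 ⋯ w'_{i-1} x_i`. -/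
def betaPrefix {A : Type} (ustart : List A) (w' : ℕ → List A) (i : ℕ) :
    List (Option A ⊕ ℕ) :=
  hash :: lift ustart ++ blocks w' (i - 1) ++ [Sum.inr i]

/-- `h` is a solution of the equation α = β. -/
def IsSolution {A : Type} (h : ℕ → List (Option A)) (α β : List (Option A ⊕ ℕ)) : Prop :=
  applySub h α = applySub h β

/-- `h` is an overlapping solution of α_μ = β_μ : it is a solution and, for every
`1 ≤ i ≤ n`, there is `z_i` such that `w_i z_i` is a suffix of `h(x_i)` and
`h(# u_start x_1 w'_1 ⋯ w'_{i-1} x_i) = h(x_1 w_1 ⋯ x_i w_i) z_i`. -/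
def OverlappingSolution {A : Type} (n : ℕ) (ustart uend : List A) (w w' : ℕ → List A)
    (h : ℕ → List (Option A)) : Prop :=
  IsSolution h (alphaMu n uend w) (betaMu n ustart w') ∧
  ∀ i, 1 ≤ i → i ≤ n → ∃ z : List (Option A),
    (liftW (w i) ++ z) <:+ h i ∧
    applySub h (betaPrefix ustart w' i) = applySub h (alphaPrefix w i) ++ z

/-- `n`-fold concatenation `u^n` of the word `u`. -/
def npow {A : Type} (u : List A) : ℕ → List A
  | 0 => []
  | n + 1 => u ++ npow u n

/-- `y_i`, the suffix of `h(x_i)` of length `|v_i| - |w_i|`. -/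
def ySuf {A : Type} (h : ℕ → List (Option A)) (v : ℕ → List (Option A)) (w : ℕ → List A)
    (i : ℕ) : List (Option A) :=
  (h i).drop ((h i).length - ((v i).length - (w i).length))

/-- Two words are conjugate if `u = st` and `v = ts` for some words `s`, `t`. -/
def Conj {B : Type} (u v : List B) : Prop := ∃ s t : List B, u = s ++ t ∧ v = t ++ s

/-- The words `v_1, …, v_n` associated with an overlapping solution `h`
(as guaranteed by the characterisation of overlapping solutions):
`v_i` is a prefix of `h(x_i)`, `|w_i| ≤ |v_i|`, `h(x_i) w_i` is a prefix of `v_i^ω`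
(i.e. of `v_i^m` for all sufficiently large `m`), `v_1 = # u_start`,
`v_i = y_{i-1} w'_{i-1}` for `2 ≤ i ≤ n`, and `y_n w'_n h(x_{n+1}) = h(x_{n+1}) # u_end`. -/
def AssocWords {A : Type} (n : ℕ) (ustart uend : List A) (w w' : ℕ → List A)
    (h : ℕ → List (Option A)) (v : ℕ → List (Option A)) : Prop :=
  (∀ i, 1 ≤ i → i ≤ n →
    v i <+: h i ∧ (w i).length ≤ (v i).length ∧
    ∃ N : ℕ, ∀ m : ℕ, N ≤ m → (h i ++ liftW (w i)) <+: npow (v i) m) ∧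
  v 1 = none :: liftW ustart ∧
  (∀ i, 2 ≤ i → i ≤ n → v i = ySuf h v w (i - 1) ++ liftW (w' (i - 1))) ∧
  ySuf h v w n ++ liftW (w' n) ++ h (n + 1) = h (n + 1) ++ none :: liftW uend

end REP

namespace REP

variable {A : Type}

theorem liftW_length (u : List A) : (liftW u).length = u.length := by
  simp [liftW]

theorem applySub_append (h : ℕ → List (Option A)) (p q : List (Option A ⊕ ℕ)) :
    applySub h (p ++ q) = applySub h p ++ applySub h q := by
  induction p with
  | nil => rfl
  | cons a rest ih => cases a <;> simp [applySub, ih]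

theorem applySub_lift (h : ℕ → List (Option A)) (u : List A) :
    applySub h (lift u) = liftW u := by
  induction u with
  | nil => rfl
  | cons a u ih => simpa [lift, liftW, applySub] using ih

theorem npow_length (v : List (Option A)) (m : ℕ) : (npow v m).length = m * v.length := by
  induction m with
  | zero => simp [npow]
  | succ m ih => simp [npow, ih]; ring

theorem npow_add (v : List (Option A)) (a b : ℕ) : npow v (a + b) = npow v a ++ npow v b := by
  induction a with
  | zero => simp [npow]
  | succ a ih =>
    have h : a + 1 + b = (a + b) + 1 := by omega
    rw [h]
    show v ++ npow v (a + b) = (v ++ npow v a) ++ npow v b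
    rw [ih, List.append_assoc]

theorem pump {v hh t : List (Option A)} (e : v ++ hh = hh ++ t) :
    ∀ m, npow v m ++ hh = hh ++ npow t m := by
  intro m
  induction m with
  | zero => simp [npow]
  | succ m ih =>
    calc npow v (m + 1) ++ hh = v ++ (npow v m ++ hh) := by simp [npow]
      _ = v ++ (hh ++ npow t m) := by rw [ih]
      _ = (v ++ hh) ++ npow t m := by rw [List.append_assoc]
      _ = (hh ++ t) ++ npow t m := by rw [e]
      _ = hh ++ npow t (m + 1) := by simp [npow]

theorem prefix_append_left {x l₁ l₂ : List (Option A)} (h : l₁ <+: l₂) :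
    x ++ l₁ <+: x ++ l₂ := by
  obtain ⟨r, rfl⟩ := h
  exact ⟨r, by rw [List.append_assoc]⟩

theorem conj_prefix_pow {v hh t : List (Option A)} (e : v ++ hh = hh ++ t) (hv : v ≠ [])
    {m : ℕ} (hm : hh.length + t.length + 1 ≤ m) : (hh ++ t) <+: npow v m := by
  obtain ⟨k, rfl⟩ : ∃ k, m = k + 1 := ⟨m - 1, by omega⟩
  have h1 : hh ++ t <+: hh ++ npow t (k + 1) :=
    prefix_append_left ⟨npow t k, by simp [npow]⟩
  rw [← pump e (k + 1)] at h1
  have h2 : npow v (k + 1) <+: npow v (k + 1) ++ hh := ⟨hh, rfl⟩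
  have h3 : (hh ++ t).length ≤ (npow v (k + 1)).length := by
    rw [npow_length, List.length_append]
    have hv1 : 1 ≤ v.length := List.length_pos_iff.mpr hv
    have : (k + 1) * 1 ≤ (k + 1) * v.length := Nat.mul_le_mul_left _ hv1
    omega
  exact List.prefix_of_prefix_length_le h1 h2 h3

theorem suffix_eq_drop {l hh : List (Option A)} (hs : l <:+ hh) :
    l = hh.drop (hh.length - l.length) := by
  obtain ⟨s, rfl⟩ := hs
  rw [List.length_append, Nat.add_sub_cancel, List.drop_left]

theorem key_fwd {v hh t : List (Option A)} (e : v ++ hh = hh ++ t) (ht : t <:+ hh) :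
    v <+: hh := by
  have h1 : v <+: hh ++ t := e ▸ ⟨hh, rfl⟩
  have h2 : hh <+: hh ++ t := ⟨t, rfl⟩
  have hlen : v.length ≤ hh.length := by
    have e2 := congrArg List.length e
    simp only [List.length_append] at e2
    have := ht.length_le
    omega
  exact List.prefix_of_prefix_length_le h1 h2 hlen

theorem key_back {v hh wl : List (Option A)} (hp : v <+: hh) (hlen : wl.length ≤ v.length)
    (hper : ∃ N, ∀ m, N ≤ m → (hh ++ wl) <+: npow v m) :
    v ++ hh = hh ++ (wl ++ hh.drop (hh.length - (v.length - wl.length))) ∧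
      (wl ++ hh.drop (hh.length - (v.length - wl.length))) <:+ hh := by
  obtain ⟨N, hN⟩ := hper
  have hvh : v.length ≤ hh.length := hp.length_le
  have h1 : hh ++ wl <+: npow v (N + 1) := hN _ (Nat.le_succ N)
  have h1' : hh ++ wl <+: npow v (N + 2) :=
    h1.trans ⟨npow v 1, (npow_add v (N + 1) 1).symm⟩
  have h2 : v ++ hh <+: npow v (N + 2) := by
    have hh1 : hh <+: npow v (N + 1) := (List.prefix_append hh wl).trans h1
    have he : npow v (N + 2) = v ++ npow v (N + 1) := rfl
    rw [he]
    exact prefix_append_left hh1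
  have h3 : hh ++ wl <+: v ++ hh := by
    apply List.prefix_of_prefix_length_le h1' h2
    simp only [List.length_append]; omega
  obtain ⟨y, hy⟩ := h3
  have hylen : y.length = v.length - wl.length := by
    have := congrArg List.length hy
    simp only [List.length_append] at this
    omega
  have hysuf : y <:+ hh := by
    have hs1 : y <:+ v ++ hh := ⟨hh ++ wl, hy⟩
    have hs2 : hh <:+ v ++ hh := ⟨v, rfl⟩
    apply List.suffix_of_suffix_length_le hs1 hs2
    omega
  have hwys : wl ++ y <:+ hh := by
    have hs1 : wl ++ y <:+ v ++ hh := ⟨hh, by rw [← hy, List.append_assoc]⟩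
    have hs2 : hh <:+ v ++ hh := ⟨v, rfl⟩
    apply List.suffix_of_suffix_length_le hs1 hs2
    simp only [List.length_append]; omega
  have hyd : y = hh.drop (hh.length - (v.length - wl.length)) := by
    rw [← hylen]; exact suffix_eq_drop hysuf
  constructor
  · rw [← hyd, ← hy]; simp [List.append_assoc]
  · rw [← hyd]; exact hwys

theorem applySub_blocks (h : ℕ → List (Option A)) (w : ℕ → List A) (k : ℕ) :
    applySub h (blocks w (k + 1)) =
      applySub h (blocks w k) ++ (h (k + 1) ++ liftW (w (k + 1))) := by
  simp [blocks, applySub_append, applySub, applySub_lift]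

theorem applySub_betaPrefix (h : ℕ → List (Option A)) (ustart : List A) (w' : ℕ → List A)
    (i : ℕ) :
    applySub h (betaPrefix ustart w' i) =
      none :: (liftW ustart ++ (applySub h (blocks w' (i - 1)) ++ h i)) := by
  simp [betaPrefix, applySub, applySub_append, applySub_lift, hash]

theorem applySub_alphaMu (h : ℕ → List (Option A)) (n : ℕ) (uend : List A) (w : ℕ → List A) :
    applySub h (alphaMu n uend w) =
      applySub h (blocks w n) ++ (h (n + 1) ++ (none :: liftW uend)) := by
  simp [alphaMu, applySub_append, applySub, applySub_lift, hash]

theorem applySub_betaMu (h : ℕ → List (Option A)) (n : ℕ) (ustart : List A) (w' : ℕ → List A) :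
    applySub h (betaMu n ustart w') =
      none :: (liftW ustart ++ (applySub h (blocks w' n) ++ h (n + 1))) := by
  simp [betaMu, applySub_append, applySub, applySub_lift, hash]

end REP

/-!
STATEMENT 3: characterisation of overlapping solutions of α_μ = β_μ in terms of
the period words v_1, …, v_n (`AssocWords` spells out conditions (1)–(3), with
`ySuf h v w i` being y_i, the suffix of h(x_i) of length |v_i| − |w_i|).
-/

open REP in
theorem stmt3 (A : Type) (n : ℕ) (hn : 1 ≤ n) (ustart uend : List A)
    (w w' : ℕ → List A) (h : ℕ → List (Option A)) :
    OverlappingSolution n ustart uend w w' h ↔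
    ∃ v : ℕ → List (Option A),
      (∀ i, 1 ≤ i → i ≤ n →
        v i <+: h i ∧ (w i).length ≤ (v i).length ∧
        ∃ N : ℕ, ∀ m : ℕ, N ≤ m → (h i ++ liftW (w i)) <+: npow (v i) m) ∧
      v 1 = none :: liftW ustart ∧
      (∀ i, 2 ≤ i → i ≤ n → v i = ySuf h v w (i - 1) ++ liftW (w' (i - 1))) ∧
      ySuf h v w n ++ liftW (w' n) ++ h (n + 1) = h (n + 1) ++ none :: liftW uend := by
  constructor
  · rintro ⟨hsol, hov⟩
    have hov' : ∀ i, ∃ zz : List (Option A), 1 ≤ i → i ≤ n →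
        (liftW (w i) ++ zz) <:+ h i ∧
        applySub h (betaPrefix ustart w' i) = applySub h (alphaPrefix w i) ++ zz := by
      intro i
      by_cases hi : 1 ≤ i ∧ i ≤ n
      · obtain ⟨zz, hz1, hz2⟩ := hov i hi.1 hi.2
        exact ⟨zz, fun _ _ => ⟨hz1, hz2⟩⟩
      · exact ⟨[], fun a b => absurd ⟨a, b⟩ hi⟩
    choose z hz using hov'
    set v : ℕ → List (Option A) :=
      fun i => if i ≤ 1 then none :: liftW ustart else z (i - 1) ++ liftW (w' (i - 1))
      with hvdef
    have hv1 : v 1 = none :: liftW ustart := by simp [hvdef]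
    have hv2 : ∀ i, 2 ≤ i → v i = z (i - 1) ++ liftW (w' (i - 1)) := by
      intro i hi
      simp only [hvdef]
      rw [if_neg (by omega)]
    have hE : ∀ i, 1 ≤ i → i ≤ n → v i ++ h i = h i ++ (liftW (w i) ++ z i) := by
      intro i h1 h2
      match i, h1 with
      | 1, _ =>
        have hb := (hz 1 le_rfl (by omega)).2
        rw [applySub_betaPrefix] at hb
        simp only [alphaPrefix] at hb
        have e0 : applySub h (blocks w 1) = applySub h (blocks w 0) ++ (h 1 ++ liftW (w 1)) :=
          applySub_blocks h w 0
        rw [e0] at hb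
        simp only [blocks, applySub, List.nil_append, List.cons_append,
          List.append_assoc, show (1 : ℕ) - 1 = 0 from rfl] at hb
        rw [hv1]
        simp only [List.cons_append, List.append_assoc]
        exact hb
      | (k + 2), _ =>
        have hk1 : (1 : ℕ) ≤ k + 1 := by omega
        have hk2 : k + 1 ≤ n := by omega
        have hb2 := (hz (k + 2) (by omega) h2).2
        have hb1 := (hz (k + 1) hk1 hk2).2
        rw [applySub_betaPrefix] at hb2 hb1
        simp only [alphaPrefix] at hb2 hb1
        rw [show k + 2 - 1 = k + 1 from rfl] at hb2
        rw [show k + 1 - 1 = k from rfl] at hb1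
        rw [applySub_blocks h w' k] at hb2
        rw [applySub_blocks h w (k + 1)] at hb2
        have e1 := congrArg (· ++ (liftW (w' (k + 1)) ++ h (k + 2))) hb1
        simp only [List.append_assoc, List.cons_append] at e1 hb2
        have e2 := List.append_cancel_left (e1.symm.trans hb2)
        rw [hv2 (k + 2) (by omega), show k + 2 - 1 = k + 1 from rfl]
        simp only [List.append_assoc]
        exact e2
    have hwl0 : ∀ u : List A, (liftW u).countP (fun a => a.isNone) = 0 := by
      intro u
      simp [liftW, List.countP_map, Function.comp]
    have hcnt : ∀ i, 1 ≤ i → i ≤ n → (v i).countP (fun a => a.isNone) = 1 := by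
      intro i
      induction i with
      | zero => intro h1 _; omega
      | succ k ih =>
        intro _ h2
        rcases Nat.eq_zero_or_pos k with hk | hk
        · subst hk
          rw [hv1]
          simp [List.countP_cons, hwl0]
        · have hk2 : k ≤ n := by omega
          have ecnt := congrArg (List.countP (fun a => a.isNone)) (hE k hk hk2)
          simp only [List.countP_append] at ecnt
          rw [hv2 (k + 1) (by omega), show k + 1 - 1 = k from rfl,
            List.countP_append, hwl0 (w' k)]
          rw [hwl0 (w k)] at ecnt
          have ihk := ih hk hk2
          omega
    have hvne : ∀ i, 1 ≤ i → i ≤ n → v i ≠ [] := by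
      intro i h1 h2 hnil
      have := hcnt i h1 h2
      rw [hnil] at this
      simp at this
    have hlen : ∀ i, 1 ≤ i → i ≤ n → (v i).length = (w i).length + (z i).length := by
      intro i h1 h2
      have := congrArg List.length (hE i h1 h2)
      simp only [List.length_append, liftW_length] at this
      omega
    have hzsuf : ∀ i, 1 ≤ i → i ≤ n → z i <:+ h i := by
      intro i h1 h2
      exact List.IsSuffix.trans (List.suffix_append (liftW (w i)) (z i)) (hz i h1 h2).1
    have hzy : ∀ i, 1 ≤ i → i ≤ n → z i = ySuf h v w i := by
      intro i h1 h2
      have hd := suffix_eq_drop (hzsuf i h1 h2)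
      have hl := hlen i h1 h2
      show z i = (h i).drop ((h i).length - ((v i).length - (w i).length))
      rw [show (v i).length - (w i).length = (z i).length by omega]
      exact hd
    refine ⟨v, ?_, hv1, ?_, ?_⟩
    · intro i h1 h2
      have e := hE i h1 h2
      have hsfx := (hz i h1 h2).1
      refine ⟨key_fwd e hsfx, ?_, ?_⟩
      · have := hlen i h1 h2; omega
      · refine ⟨(h i).length + (liftW (w i) ++ z i).length + 1, fun m hm => ?_⟩
        have hp := conj_prefix_pow e (hvne i h1 h2) hm
        exact List.IsPrefix.trans ⟨z i, List.append_assoc _ _ _⟩ hp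
    · intro i hi2 hin
      rw [hv2 i hi2, hzy (i - 1) (by omega) (by omega)]
    · have hs : applySub h (alphaMu n uend w) = applySub h (betaMu n ustart w') := hsol
      obtain ⟨k, rfl⟩ : ∃ k, n = k + 1 := ⟨n - 1, by omega⟩
      rw [applySub_alphaMu, applySub_betaMu, applySub_blocks h w' k] at hs
      have hb1 := (hz (k + 1) (by omega) (by omega)).2
      rw [applySub_betaPrefix] at hb1
      simp only [alphaPrefix] at hb1
      rw [show k + 1 - 1 = k from rfl] at hb1
      have e1 := congrArg (· ++ (liftW (w' (k + 1)) ++ h (k + 2))) hb1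
      simp only [List.append_assoc, List.cons_append,
        show k + 1 + 1 = k + 2 from rfl] at e1 hs
      have e2 := List.append_cancel_left (hs.trans e1)
      rw [← hzy (k + 1) (by omega) (by omega)]
      simp only [List.append_assoc, show k + 1 + 1 = k + 2 from rfl]
      exact e2.symm
  · rintro ⟨v, hone, hv1, hv3, hv4⟩
    have hkey : ∀ i, 1 ≤ i → i ≤ n →
        v i ++ h i = h i ++ (liftW (w i) ++ ySuf h v w i) ∧
        (liftW (w i) ++ ySuf h v w i) <:+ h i := by
      intro i h1 h2
      obtain ⟨hp, hl, hper⟩ := hone i h1 h2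
      have hwl : (liftW (w i)).length ≤ (v i).length := by rw [liftW_length]; exact hl
      have kb := key_back hp hwl hper
      rw [liftW_length] at kb
      exact kb
    have hBA : ∀ i, 1 ≤ i → i ≤ n →
        applySub h (betaPrefix ustart w' i) = applySub h (blocks w i) ++ ySuf h v w i := by
      intro i
      induction i with
      | zero => intro h1 _; omega
      | succ k ih =>
        intro _ h2
        rcases Nat.eq_zero_or_pos k with hk | hk
        · subst hk
          have e := (hkey 1 le_rfl (by omega)).1
          rw [hv1] at e
          rw [applySub_betaPrefix]
          have e0 : applySub h (blocks w 1) = applySub h (blocks w 0) ++ (h 1 ++ liftW (w 1)) :=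
            applySub_blocks h w 0
          rw [e0]
          simp only [blocks, applySub, List.nil_append, List.cons_append,
            List.append_assoc, show (1 : ℕ) - 1 = 0 from rfl] at e ⊢
          exact e
        · obtain ⟨m, rfl⟩ : ∃ m, k = m + 1 := ⟨k - 1, by omega⟩
          have ihk := ih (by omega) (by omega)
          have e := (hkey (m + 2) (by omega) h2).1
          rw [hv3 (m + 2) (by omega) h2, show m + 2 - 1 = m + 1 from rfl] at e
          rw [applySub_betaPrefix, show m + 1 - 1 = m from rfl] at ihk
          have e1 := congrArg (· ++ (liftW (w' (m + 1)) ++ h (m + 2))) ihk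
          rw [applySub_betaPrefix, show m + 2 - 1 = m + 1 from rfl,
            applySub_blocks h w' m, applySub_blocks h w (m + 1)]
          simp only [List.append_assoc, List.cons_append] at e1 e ⊢
          rw [e1, e]
    constructor
    · show applySub h (alphaMu n uend w) = applySub h (betaMu n ustart w')
      obtain ⟨k, rfl⟩ : ∃ k, n = k + 1 := ⟨n - 1, by omega⟩
      rw [applySub_alphaMu, applySub_betaMu, applySub_blocks h w' k]
      have hb := hBA (k + 1) (by omega) (by omega)
      rw [applySub_betaPrefix, show k + 1 - 1 = k from rfl] at hb
      have e1 := congrArg (· ++ (liftW (w' (k + 1)) ++ h (k + 2))) hb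
      simp only [List.append_assoc, show k + 1 + 1 = k + 2 from rfl] at hv4
      simp only [List.append_assoc, List.cons_append,
        show k + 1 + 1 = k + 2 from rfl] at e1 ⊢
      rw [e1, hv4]
    · intro i h1 h2
      refine ⟨ySuf h v w i, (hkey i h1 h2).2, ?_⟩
      have hb := hBA i h1 h2
      simpa [alphaPrefix] using hb
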